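/- Let Φ be a CNF formula with clauses C_1,…,C_k (k ≥ 1), each clause a finite set of literals involving pairwise distinct variables, and let s, (1,l_1), (2,l_2), …, (k,l_k), t be an irreducible directed path in G_Φ with l_i ∈ C_i for each i. Then the chosen literals are pairwise non-contradictory: for all 1 ≤ i < j ≤ k, l_i ≠ l_j¯ (since for j = i+1 the arc ((i,l_i),(i+1,l_{i+1})) requires l_i ≠ l_{i+1}¯, and for j > i+1 an equality l_i = l_j¯ would create the arc ((i,l_i),(j,l_j)), contradicting irreducibility). -/

import Mathlib

/-- Vertices of the digraph `G_Φ`: a source `s`, a sink `t`, and a vertex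
`node i l` for each literal `l` of each clause `C i`. Literals over the variable
type `V` are pairs in `V × Bool`. -/
inductive Vtx (V : Type*) where
  | s : Vtx V
  | t : Vtx V
  | node : ℕ → V × Bool → Vtx V

/-- Negation of a literal: `(v, b)¯ = (v, ¬b)`. -/
def negLit {V : Type*} (l : V × Bool) : V × Bool := (l.1, !l.2)

/-- Arc relation of the digraph `G_Φ` for a CNF formula with clauses
`C 1, …, C k`: arcs `(s, (1, l))` for `l ∈ C 1`; arcs `((k, l), t)` for
`l ∈ C k`; arcs `((i, x), (i+1, y))` for `x ∈ C i`, `y ∈ C (i+1)` with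
`x ≠ ȳ`; and arcs `((i, x), (j, y))` for `x ∈ C i`, `y ∈ C j` with `j > i + 1`
and `x = ȳ`. -/
def arc {V : Type*} (k : ℕ) (C : ℕ → Finset (V × Bool)) : Vtx V → Vtx V → Prop
  | Vtx.s, Vtx.node i l => i = 1 ∧ l ∈ C 1
  | Vtx.node i l, Vtx.t => i = k ∧ l ∈ C k
  | Vtx.node i x, Vtx.node j y =>
      1 ≤ i ∧ j ≤ k ∧ x ∈ C i ∧ y ∈ C j ∧
        ((j = i + 1 ∧ x ≠ negLit y) ∨ (i + 1 < j ∧ x = negLit y))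
  | _, _ => False

/-- The candidate path in `G_Φ`: `s, (1, l 1), (2, l 2), …, (k, l k), t`. -/
def pathSeq {V : Type*} (k : ℕ) (l : ℕ → V × Bool) (r : ℕ) : Vtx V :=
  if r = 0 then Vtx.s else if r ≤ k then Vtx.node r (l r) else Vtx.t

/-- If `s, (1, l 1), …, (k, l k), t` (with `l i ∈ C i`) is an irreducible
directed path in `G_Φ`, then the chosen literals are pairwise
non-contradictory: `l i ≠ (l j)¯` for all `1 ≤ i < j ≤ k`. -/
theorem irreduciblePath_literals_noncontradictory {V : Type*} (k : ℕ) (hk : 1 ≤ k)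
    (C : ℕ → Finset (V × Bool))
    (hdist : ∀ i, 1 ≤ i → i ≤ k → ∀ l ∈ C i, ∀ l' ∈ C i, l.1 = l'.1 → l = l')
    (l : ℕ → V × Bool) (hl : ∀ i, 1 ≤ i → i ≤ k → l i ∈ C i)
    (hirr : ∀ i j, i < j → j ≤ k + 1 →
      (arc k C (pathSeq k l i) (pathSeq k l j) ↔ j = i + 1)) :
    ∀ i j, 1 ≤ i → i < j → j ≤ k → l i ≠ negLit (l j) := by
  intro i j hi hij hjk heq
  have hps : ∀ r, 1 ≤ r → r ≤ k → pathSeq k l r = Vtx.node r (l r) := by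
    intro r h1 h2
    simp [pathSeq, h2, Nat.ne_zero_of_lt h1]
  have hij' := hirr i j hij (by omega)
  rw [hps i hi (by omega), hps j (by omega) hjk] at hij'
  rcases Nat.lt_or_ge (i+1) j with hlt | hge
  · have : arc k C (Vtx.node i (l i)) (Vtx.node j (l j)) :=
      ⟨hi, hjk, hl i hi (by omega), hl j (by omega) hjk, Or.inr ⟨hlt, heq⟩⟩
    have := hij'.mp this
    omega
  · have hj : j = i + 1 := by omega
    have harc := hij'.mpr hj
    rcases harc with ⟨_, _, _, _, h | h⟩
    · exact h.2 heq
    · omega
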